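/- Let Ω ⊆ ℂ be an open neighborhood of 0 and Φ(z) = Σ_{n≥0} c_n zⁿ a holomorphic function such that k(z, w) := Φ(z̄·w) defines a positive definite kernel on Ω. Then c_n ≥ 0 for all n ≥ 0. -/

import Mathlib

open Complex Finset

lemma rootsum (m : ℕ) (hm : m ≠ 0) (d : ℤ) :
    ∑ j ∈ range m, Complex.exp (2 * Real.pi * I / m) ^ ((j : ℤ) * d)
      = if (m : ℤ) ∣ d then (m : ℂ) else 0 := by
  set ω := Complex.exp (2 * Real.pi * I / m) with hω
  have hprim : IsPrimitiveRoot ω m := Complex.isPrimitiveRoot_exp m hm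
  have hω0 : ω ≠ 0 := Complex.exp_ne_zero _
  have key : ∀ j : ℕ, ω ^ ((j : ℤ) * d) = (ω ^ d) ^ j := by
    intro j
    rw [mul_comm, zpow_mul, zpow_natCast]
  simp_rw [key]
  by_cases h : (m : ℤ) ∣ d
  · have : ω ^ d = 1 := (hprim.zpow_eq_one_iff_dvd d).2 h
    simp [this, h]
  · have h1 : ω ^ d ≠ 1 := fun hc => h ((hprim.zpow_eq_one_iff_dvd d).1 hc)
    rw [geom_sum_eq h1]
    have : (ω ^ d) ^ m = 1 := by
      rw [← zpow_natCast, ← zpow_mul, mul_comm, zpow_mul, zpow_natCast,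
        hprim.pow_eq_one, one_zpow]
    simp [this, h]


lemma conj_omega_zpow (m : ℕ) (z : ℤ) :
    (starRingEnd ℂ) (Complex.exp (2 * Real.pi * I / m) ^ z)
      = Complex.exp (2 * Real.pi * I / m) ^ (-z) := by
  rw [map_zpow₀, ← Complex.exp_conj]
  have : (starRingEnd ℂ) (2 * Real.pi * I / m) = -(2 * Real.pi * I / m) := by
    simp [map_div₀, Complex.conj_I, Complex.conj_ofReal, map_ofNat]
    ring
  rw [this, Complex.exp_neg, inv_zpow, ← zpow_neg]

lemma term_eq (m n l : ℕ) (cl : ℂ) (ε : ℝ) (j k : ℕ) :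
    (starRingEnd ℂ) (Complex.exp (2 * Real.pi * I / m) ^ (-((j : ℤ) * n)))
      * (cl * ((starRingEnd ℂ) ((ε : ℂ) * Complex.exp (2 * Real.pi * I / m) ^ (j : ℤ))
          * ((ε : ℂ) * Complex.exp (2 * Real.pi * I / m) ^ (k : ℤ))) ^ l)
      * Complex.exp (2 * Real.pi * I / m) ^ (-((k : ℤ) * n))
    = cl * (ε : ℂ) ^ (2 * l) *
        (Complex.exp (2 * Real.pi * I / m) ^ (-((j : ℤ) * ((l : ℤ) - n)))
          * Complex.exp (2 * Real.pi * I / m) ^ ((k : ℤ) * ((l : ℤ) - n))) := by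
  set ω := Complex.exp (2 * Real.pi * I / m) with hω
  have hω0 : ω ≠ 0 := Complex.exp_ne_zero _
  rw [map_mul, conj_omega_zpow, conj_omega_zpow, Complex.conj_ofReal, neg_neg]
  rw [← hω]
  have h1 : (ε : ℂ) * ω ^ (-(j:ℤ)) * ((ε:ℂ) * ω ^ (k:ℤ))
      = (ε:ℂ)^2 * ω ^ ((k:ℤ) - j) := by
    rw [mul_mul_mul_comm, ← zpow_add₀ hω0, sq]
    ring_nf
  rw [h1, mul_pow, ← zpow_natCast (ω ^ ((k:ℤ) - j)), ← zpow_mul, ← pow_mul]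
  have h2 : ω ^ ((j:ℤ)*n) * ω ^ (((k:ℤ)-j)*l) * ω ^ (-((k:ℤ)*n))
      = ω ^ (-((j:ℤ)*((l:ℤ)-n))) * ω ^ ((k:ℤ)*((l:ℤ)-n)) := by
    rw [← zpow_add₀ hω0, ← zpow_add₀ hω0, ← zpow_add₀ hω0]
    congr 1; ring
  calc ω ^ ((j:ℤ)*n) * (cl * ((ε:ℂ)^(2*l) * ω ^ (((k:ℤ)-j)*l))) * ω ^ (-((k:ℤ)*n))
      = cl * (ε:ℂ)^(2*l) * (ω ^ ((j:ℤ)*n) * ω ^ (((k:ℤ)-j)*l) * ω ^ (-((k:ℤ)*n))) := by ring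
    _ = _ := by rw [h2]

lemma Al (m n l : ℕ) (hm : m ≠ 0) (cl : ℂ) (ε : ℝ) :
    ∑ j ∈ range m, ∑ k ∈ range m,
      (starRingEnd ℂ) (Complex.exp (2 * Real.pi * I / m) ^ (-((j : ℤ) * n)))
        * (cl * ((starRingEnd ℂ) ((ε : ℂ) * Complex.exp (2 * Real.pi * I / m) ^ (j : ℤ))
            * ((ε : ℂ) * Complex.exp (2 * Real.pi * I / m) ^ (k : ℤ))) ^ l)
        * Complex.exp (2 * Real.pi * I / m) ^ (-((k : ℤ) * n))
    = cl * (ε : ℂ) ^ (2 * l) *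
        (if (m : ℤ) ∣ ((l : ℤ) - n) then ((m : ℂ))^2 else 0) := by
  simp_rw [term_eq]
  set ω := Complex.exp (2 * Real.pi * I / m) with hω
  have : ∀ j ∈ range m, ∀ k ∈ range m, True := fun _ _ _ _ => trivial
  rw [show (∑ j ∈ range m, ∑ k ∈ range m, cl * (ε:ℂ)^(2*l) *
      (ω ^ (-((j:ℤ) * ((l:ℤ) - n))) * ω ^ ((k:ℤ) * ((l:ℤ) - n))))
    = cl * (ε:ℂ)^(2*l) * ((∑ j ∈ range m, ω ^ (-((j:ℤ) * ((l:ℤ) - n))))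
        * (∑ k ∈ range m, ω ^ ((k:ℤ) * ((l:ℤ) - n)))) from by
    rw [Finset.sum_mul_sum]
    simp_rw [Finset.mul_sum]
    try ring_nf]
  congr 1
  have h1 : ∀ j : ℕ, (-((j:ℤ) * ((l:ℤ) - n))) = (j:ℤ) * ((n:ℤ) - l) := by intro j; ring
  simp_rw [h1]
  rw [rootsum m hm ((n:ℤ) - l), rootsum m hm ((l:ℤ) - n)]
  have hd : ((m:ℤ) ∣ ((n:ℤ) - l)) ↔ ((m:ℤ) ∣ ((l:ℤ) - n)) := by
    constructor <;> intro h <;> simpa using h.neg_right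
  by_cases h : (m:ℤ) ∣ ((l:ℤ) - n)
  · simp [h, hd.2 h, sq]
  · simp [h, fun hc => h (hd.1 hc)]

lemma key_identity (c : ℕ → ℂ) (m n : ℕ) (hnm : n < m) (ε : ℝ)
    (hsum : ∀ j k : ℕ, Summable fun l => c l *
      ((starRingEnd ℂ) ((ε:ℂ) * Complex.exp (2*Real.pi*I/m) ^ (j:ℤ)) *
        ((ε:ℂ) * Complex.exp (2*Real.pi*I/m) ^ (k:ℤ))) ^ l) :
    ∑ j ∈ range m, ∑ k ∈ range m,
      (starRingEnd ℂ) (Complex.exp (2*Real.pi*I/m) ^ (-((j:ℤ)*n)))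
        * (∑' l, c l * ((starRingEnd ℂ) ((ε:ℂ) * Complex.exp (2*Real.pi*I/m) ^ (j:ℤ)) *
            ((ε:ℂ) * Complex.exp (2*Real.pi*I/m) ^ (k:ℤ))) ^ l)
        * (Complex.exp (2*Real.pi*I/m) ^ (-((k:ℤ)*n)))
    = (m:ℂ)^2 * (ε:ℂ)^(2*n) *
        (c n + ∑' t, c (n+(t+1)*m) * (ε:ℂ)^(2*((t+1)*m))) := by
  have hm0 : m ≠ 0 := by omega
  set ω := Complex.exp (2*Real.pi*I/m) with hω
  set F : ℕ → ℕ → ℕ → ℂ := fun j k l =>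
    (starRingEnd ℂ) (ω ^ (-((j:ℤ)*n)))
      * (c l * ((starRingEnd ℂ) ((ε:ℂ) * ω ^ (j:ℤ)) * ((ε:ℂ) * ω ^ (k:ℤ))) ^ l)
      * (ω ^ (-((k:ℤ)*n))) with hF
  have hFsum : ∀ j k : ℕ, Summable (F j k) := fun j k =>
    ((hsum j k).mul_left _).mul_right _
  -- step: pull constants into tsum
  have step1 : ∀ j k : ℕ,
      (starRingEnd ℂ) (ω ^ (-((j:ℤ)*n)))
        * (∑' l, c l * ((starRingEnd ℂ) ((ε:ℂ) * ω ^ (j:ℤ)) * ((ε:ℂ) * ω ^ (k:ℤ))) ^ l)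
        * (ω ^ (-((k:ℤ)*n))) = ∑' l, F j k l := by
    intro j k
    rw [← tsum_mul_left, ← tsum_mul_right]
  simp_rw [step1]
  -- swap sums with tsum
  have step2 : ∑ j ∈ range m, ∑ k ∈ range m, ∑' l, F j k l
      = ∑' l, ∑ j ∈ range m, ∑ k ∈ range m, F j k l := by
    rw [Summable.tsum_finsetSum fun j _ => summable_sum fun k _ => hFsum j k]
    exact Finset.sum_congr rfl fun j _ => (Summable.tsum_finsetSum fun k _ => hFsum j k).symm
  rw [step2]
  -- per-l evaluation
  set g : ℕ → ℂ := fun l => c l * (ε:ℂ)^(2*l) * (if (m:ℤ) ∣ ((l:ℤ) - n) then ((m:ℂ))^2 else 0)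
    with hg
  have hAl : ∀ l, ∑ j ∈ range m, ∑ k ∈ range m, F j k l = g l := fun l => Al m n l hm0 (c l) ε
  rw [tsum_congr hAl]
  have hgsum : Summable g :=
    (summable_sum fun j (_ : j ∈ range m) =>
      summable_sum fun k (_ : k ∈ range m) => hFsum j k).congr hAl
  -- reindex
  set i : ℕ → ℕ := fun t => n + t*m with hi
  have hinj : Function.Injective i := by
    intro a b h
    simp only [hi] at h
    have := Nat.add_left_cancel h
    exact Nat.eq_of_mul_eq_mul_right (Nat.pos_of_ne_zero hm0) this
  have hsupp : Function.support g ⊆ Set.range i := by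
    intro l hl
    have hdvd : (m:ℤ) ∣ ((l:ℤ) - n) := by
      by_contra h
      exact hl (by simp only [hg]; rw [if_neg h, mul_zero])
    obtain ⟨q, hq⟩ := hdvd
    have hq0 : 0 ≤ q := by nlinarith [Int.natCast_nonneg l, Int.natCast_nonneg n,
      (by exact_mod_cast hnm : (n:ℤ) < m)]
    refine ⟨q.toNat, ?_⟩
    have hql : (l:ℤ) = n + q.toNat * m := by
      rw [Int.toNat_of_nonneg hq0]; linarith
    exact_mod_cast hql.symm
  rw [← Function.Injective.tsum_eq hinj hsupp]
  have hgi : ∀ t, g (i t) = (c (n + t*m) * (ε:ℂ)^(2*(n+t*m))) * (m:ℂ)^2 := by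
    intro t
    have : (m:ℤ) ∣ ((↑(n + t*m):ℤ) - n) := ⟨t, by push_cast; ring⟩
    simp only [hg, hi, this, if_true]
    try ring
  rw [tsum_congr hgi, tsum_mul_right]
  -- split off t = 0
  have hhsum : Summable fun t => c (n + t*m) * (ε:ℂ)^(2*(n+t*m)) := by
    have h1 : Summable (g ∘ i) := hgsum.comp_injective hinj
    have h2 : Summable fun t => (g ∘ i) t * ((m:ℂ)^2)⁻¹ := h1.mul_right _
    refine h2.congr fun t => ?_
    simp only [Function.comp, hgi]
    have hmC : (m:ℂ) ≠ 0 := Nat.cast_ne_zero.2 hm0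
    rw [mul_assoc, mul_inv_cancel₀ (pow_ne_zero _ hmC), mul_one]
  rw [Summable.tsum_eq_zero_add hhsum]
  have hsplit : ∀ t : ℕ, c (n + (t+1)*m) * (ε:ℂ)^(2*(n+(t+1)*m))
      = (ε:ℂ)^(2*n) * (c (n + (t+1)*m) * (ε:ℂ)^(2*((t+1)*m))) := by
    intro t
    rw [show 2*(n+(t+1)*m) = 2*n + 2*((t+1)*m) from by ring, pow_add]
    ring
  rw [tsum_congr hsplit, tsum_mul_left]
  simp only [Nat.mul_zero, Nat.add_zero, Nat.zero_mul]
  ring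



/-- A function `k : ℂ → ℂ → ℂ` is a positive definite kernel on `Ω` if every finite
matrix `(k (p i) (p j))` with points in `Ω` is Hermitian positive semidefinite. -/
def IsPosDefKernelOn (Ω : Set ℂ) (k : ℂ → ℂ → ℂ) : Prop :=
  ∀ (n : ℕ) (p : Fin n → ℂ), (∀ i, p i ∈ Ω) → ∀ c : Fin n → ℂ,
    (∑ i, ∑ j, starRingEnd ℂ (c i) * k (p i) (p j) * c j).im = 0 ∧
    0 ≤ (∑ i, ∑ j, starRingEnd ℂ (c i) * k (p i) (p j) * c j).re

/-- If `Φ(z) = Σ cₙ zⁿ` is holomorphic near `0` and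
`k(z,w) = Φ(z̄ · w)` is a positive definite kernel on an open neighborhood `Ω` of `0`,
then all the coefficients `cₙ` are nonnegative reals. -/
theorem stmt8 (Ω : Set ℂ) (hΩ : IsOpen Ω) (h0 : (0 : ℂ) ∈ Ω) (c : ℕ → ℂ)
    (hconv : ∀ z ∈ Ω, ∀ w ∈ Ω, Summable fun n => c n * (starRingEnd ℂ z * w) ^ n)
    (hpd : IsPosDefKernelOn Ω
      (fun z w => ∑' n, c n * (starRingEnd ℂ z * w) ^ n)) :
    ∀ n, (c n).im = 0 ∧ 0 ≤ (c n).re := by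
  intro n
  obtain ⟨ε0, hε0, hball⟩ := Metric.isOpen_iff.1 hΩ 0 h0
  set m := n + 1 with hmdef
  have hnm : n < m := Nat.lt_succ_self n
  have hm0 : m ≠ 0 := Nat.succ_ne_zero n
  set ω := Complex.exp (2*Real.pi*I/m) with hω
  have habs : ‖ω‖ = 1 := by
    rw [hω, Complex.norm_exp]
    have : (2 * (Real.pi:ℂ) * I / m).re = 0 := by simp [Complex.div_re]
    rw [this, Real.exp_zero]
  have hmem : ∀ ε : ℝ, 0 < ε → ε < ε0 → ∀ j : ℕ, (ε:ℂ) * ω ^ (j:ℤ) ∈ Ω := by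
    intro ε h1 h2 j
    apply hball
    rw [Metric.mem_ball, dist_zero_right, norm_mul, Complex.norm_real,
      Real.norm_of_nonneg h1.le]
    have : ‖ω ^ (j:ℤ)‖ = 1 := by
      rw [norm_zpow, habs, one_zpow]
    rw [this, mul_one]; exact h2
  set R : ℝ → ℂ := fun ε => ∑' t, c (n+(t+1)*m) * (ε:ℂ)^(2*((t+1)*m)) with hRdef
  -- Step A: positivity conditions for small ε
  have keyA : ∀ ε : ℝ, 0 < ε → ε < ε0 → (c n + R ε).im = 0 ∧ 0 ≤ (c n + R ε).re := by
    intro ε h1 h2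
    have hsum : ∀ j k : ℕ, Summable fun l => c l *
        ((starRingEnd ℂ) ((ε:ℂ) * ω ^ (j:ℤ)) * ((ε:ℂ) * ω ^ (k:ℤ))) ^ l :=
      fun j k => hconv _ (hmem ε h1 h2 j) _ (hmem ε h1 h2 k)
    obtain ⟨him, hre⟩ := hpd m (fun i : Fin m => (ε:ℂ) * ω ^ ((i:ℕ):ℤ))
      (fun i => hmem ε h1 h2 i) (fun i : Fin m => ω ^ (-(((i:ℕ):ℤ)*n)))
    have hfin : ∀ f : ℕ → ℕ → ℂ, (∑ i : Fin m, ∑ j : Fin m, f i j)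
        = ∑ i ∈ range m, ∑ j ∈ range m, f i j := by
      intro f
      rw [Fin.sum_univ_eq_sum_range (fun i => ∑ j : Fin m, f i j)]
      exact Finset.sum_congr rfl fun i _ => Fin.sum_univ_eq_sum_range _ _
    have hSval : (∑ i : Fin m, ∑ j : Fin m,
        (starRingEnd ℂ) (ω ^ (-(((i:ℕ):ℤ)*n))) *
          (∑' l, c l * ((starRingEnd ℂ) ((ε:ℂ) * ω ^ ((i:ℕ):ℤ)) *
            ((ε:ℂ) * ω ^ ((j:ℕ):ℤ))) ^ l) * ω ^ (-(((j:ℕ):ℤ)*n)))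
        = (((m:ℝ)^2 * ε^(2*n) : ℝ) : ℂ) * (c n + R ε) := by
      rw [hfin (fun a b => (starRingEnd ℂ) (ω ^ (-((a:ℤ)*n))) *
        (∑' l, c l * ((starRingEnd ℂ) ((ε:ℂ) * ω ^ (a:ℤ)) *
          ((ε:ℂ) * ω ^ (b:ℤ))) ^ l) * ω ^ (-((b:ℤ)*n)))]
      rw [key_identity c m n hnm ε hsum]
      push_cast
      ring
    rw [hSval] at him hre
    have hr : (0:ℝ) < (m:ℝ)^2 * ε^(2*n) := by positivity
    constructor
    · have := him
      rw [Complex.im_ofReal_mul] at this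
      exact (mul_eq_zero.1 this).resolve_left (ne_of_gt hr)
    · have := hre
      rw [Complex.re_ofReal_mul] at this
      exact nonneg_of_mul_nonneg_right this hr
  -- Step B: R tends to 0
  have hRt : Filter.Tendsto R (nhdsWithin 0 (Set.Ioi 0)) (nhds 0) := by
    set ε2 := ε0/2 with hε2
    have hε2p : 0 < ε2 := by positivity
    have hε2Ω : (ε2:ℂ) ∈ Ω := by
      apply hball
      rw [Metric.mem_ball, dist_zero_right, Complex.norm_real, Real.norm_of_nonneg hε2p.le]
      linarith
    have hsum2 := hconv _ hε2Ω _ hε2Ω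
    have hterm : Filter.Tendsto (fun l => ‖c l‖ * ε2^(2*l)) Filter.atTop (nhds 0) := by
      have h1 := hsum2.tendsto_atTop_zero.norm
      simp only [norm_zero] at h1
      refine h1.congr fun l => ?_
      rw [norm_mul, norm_pow, norm_mul, Complex.norm_real, RCLike.norm_conj,
        Complex.norm_real, Real.norm_of_nonneg hε2p.le, pow_mul]
      ring
    obtain ⟨C, hC⟩ := hterm.bddAbove_range
    have hC' : ∀ l, ‖c l‖ * ε2^(2*l) ≤ C := fun l => hC ⟨l, rfl⟩
    set ε3 := ε2/2 with hε3
    have hε3p : 0 < ε3 := by positivity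
    set s : ℝ := (1/2)^(2*m) with hs
    have hs0 : 0 ≤ s := by positivity
    have hs1 : s < 1 := by
      apply pow_lt_one₀ (by norm_num) (by norm_num)
      omega
    set B : ℕ → ℝ := fun t => (C/ε2^(2*n)) * s^(t+1) with hB
    have hBsum : Summable B := by
      have := (summable_geometric_of_lt_one hs0 hs1).mul_left (C/ε2^(2*n))
      exact (this.comp_injective fun a b h => by omega).congr fun t => rfl
    have := tendsto_tsum_of_dominated_convergence (f := fun (ε : ℝ) (t : ℕ) =>
        c (n+(t+1)*m) * (ε:ℂ)^(2*((t+1)*m))) (g := fun _ => (0:ℂ)) (𝓕 := nhdsWithin 0 (Set.Ioi 0))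
        hBsum ?_ ?_
    · simpa using this
    · intro t
      have hcont : Continuous fun ε : ℝ => c (n+(t+1)*m) * (ε:ℂ)^(2*((t+1)*m)) := by
        fun_prop
      have := (hcont.tendsto 0).mono_left (nhdsWithin_le_nhds (s := Set.Ioi (0:ℝ)))
      simpa [zero_pow, Nat.mul_ne_zero, hm0] using this
    · have hIoo : Set.Ioo (0:ℝ) ε3 ∈ nhdsWithin (0:ℝ) (Set.Ioi 0) :=
        Ioo_mem_nhdsGT_of_mem ⟨le_refl 0, hε3p⟩
      filter_upwards [hIoo] with ε hε t
      obtain ⟨hεp, hεlt⟩ := hε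
      have hnorm : ‖c (n+(t+1)*m) * (ε:ℂ)^(2*((t+1)*m))‖
          = ‖c (n+(t+1)*m)‖ * ε^(2*((t+1)*m)) := by
        rw [norm_mul, norm_pow, Complex.norm_real, Real.norm_of_nonneg hεp.le]
      rw [hnorm]
      have h1 : ‖c (n+(t+1)*m)‖ * ε^(2*((t+1)*m)) ≤ ‖c (n+(t+1)*m)‖ * ε3^(2*((t+1)*m)) :=
        mul_le_mul_of_nonneg_left (pow_le_pow_left₀ hεp.le hεlt.le _) (norm_nonneg _)
      have h2 : ‖c (n+(t+1)*m)‖ ≤ C / ε2^(2*(n+(t+1)*m)) := by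
        rw [le_div_iff₀ (by positivity)]
        exact hC' _
      have h3 : C / ε2^(2*(n+(t+1)*m)) * ε3^(2*((t+1)*m)) = B t := by
        have hε2e : ε2 ≠ 0 := ne_of_gt hε2p
        calc C / ε2^(2*(n+(t+1)*m)) * ε3^(2*((t+1)*m))
            = C / ε2^(2*n + 2*((t+1)*m)) * (ε2/2)^(2*((t+1)*m)) := by
              rw [show 2*(n+(t+1)*m) = 2*n + 2*((t+1)*m) from by ring, hε3]
          _ = C/ε2^(2*n) * (1/2)^(2*((t+1)*m)) := by
              rw [pow_add, div_pow]
              field_simp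
              ring
          _ = B t := by
              simp only [hB, hs]
              rw [show 2*((t+1)*m) = 2*m*(t+1) from by ring,
                pow_mul (1/2:ℝ) (2*m) (t+1)]
      calc ‖c (n+(t+1)*m)‖ * ε^(2*((t+1)*m))
          ≤ ‖c (n+(t+1)*m)‖ * ε3^(2*((t+1)*m)) := h1
        _ ≤ C / ε2^(2*(n+(t+1)*m)) * ε3^(2*((t+1)*m)) :=
            mul_le_mul_of_nonneg_right h2 (by positivity)
        _ = B t := h3
  -- Step C: conclude by taking limits
  have hQt : Filter.Tendsto (fun ε => c n + R ε) (nhdsWithin 0 (Set.Ioi 0)) (nhds (c n)) := by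
    have := (tendsto_const_nhds (x := c n) (f := nhdsWithin (0:ℝ) (Set.Ioi 0))).add hRt
    simpa using this
  have hIoo : Set.Ioo (0:ℝ) ε0 ∈ nhdsWithin (0:ℝ) (Set.Ioi 0) :=
    Ioo_mem_nhdsGT_of_mem ⟨le_refl 0, hε0⟩
  constructor
  · have h1 : Filter.Tendsto (fun ε => (c n + R ε).im) (nhdsWithin 0 (Set.Ioi 0))
        (nhds (c n).im) := (Complex.continuous_im.tendsto _).comp hQt
    refine tendsto_nhds_unique_of_eventuallyEq h1 tendsto_const_nhds ?_
    filter_upwards [hIoo] with ε hε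
    exact (keyA ε hε.1 hε.2).1
  · have h1 : Filter.Tendsto (fun ε => (c n + R ε).re) (nhdsWithin 0 (Set.Ioi 0))
        (nhds (c n).re) := (Complex.continuous_re.tendsto _).comp hQt
    refine ge_of_tendsto h1 ?_
    filter_upwards [hIoo] with ε hε
    exact (keyA ε hε.1 hε.2).2
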